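/- Let A and B be n×n complex matrices with n ≥ 1, and let ‖·‖₂ denote the spectral norm (the operator norm of the induced linear map from ℂ^n to ℂ^n, each equipped with the Euclidean norm). Then |det A − det B| ≤ n · ‖A − B‖₂ · max(‖A‖₂, ‖B‖₂)^{n−1}. -/

import Mathlib

/-- The spectral norm of a square complex matrix: the operator norm of the
induced map on Euclidean space. -/
noncomputable def specNorm {n : ℕ} (M : Matrix (Fin n) (Fin n) ℂ) : ℝ :=
  ‖LinearMap.toContinuousLinearMap (Matrix.toEuclideanLin M)‖

section Aux
open Finset Matrix ComplexOrder

lemma amgm {n : ℕ} (hn : 1 ≤ n) (f : Fin n → ℝ) (hf : ∀ i, 0 ≤ f i) :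
    ∏ i, f i ≤ ((∑ i, f i) / n) ^ n := by
  have hn' : (0:ℝ) < n := by positivity
  have h := Real.geom_mean_le_arith_mean_weighted Finset.univ (fun _ => 1 / n) f
    (fun i _ => by positivity) (by simp; field_simp) (fun i _ => hf i)
  have h2 : ∏ i, f i ^ (1 / (n:ℝ)) = (∏ i, f i) ^ (1 / (n:ℝ)) := by
    rw [← Real.finset_prod_rpow _ _ (fun i _ => hf i)]
  rw [h2] at h
  have h3 : ∑ i, (1 / (n:ℝ)) * f i = (∑ i, f i) / n := by
    rw [← Finset.mul_sum]; ring
  rw [h3] at h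
  have hp : 0 ≤ ∏ i, f i := Finset.prod_nonneg (fun i _ => hf i)
  calc ∏ i, f i = ((∏ i, f i) ^ (1 / (n:ℝ))) ^ (n:ℕ) := by
        rw [← Real.rpow_natCast ((∏ i, f i) ^ (1 / (n:ℝ))), ← Real.rpow_mul hp]
        field_simp
        simp
    _ ≤ ((∑ i, f i) / n) ^ n := by
        apply pow_le_pow_left₀ (Real.rpow_nonneg hp _) h

lemma trace_eq_sum_eig {n : ℕ} {P : Matrix (Fin n) (Fin n) ℂ} (hP : P.IsHermitian) :
    P.trace = ∑ i, (hP.eigenvalues i : ℂ) := by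
  conv_lhs => rw [hP.spectral_theorem, Unitary.conjStarAlgAut_apply]
  rw [trace_mul_cycle]
  have : (star (hP.eigenvectorUnitary : Matrix (Fin n) (Fin n) ℂ)) *
      (hP.eigenvectorUnitary : Matrix (Fin n) (Fin n) ℂ) = 1 :=
    (Matrix.mem_unitaryGroup_iff').mp hP.eigenvectorUnitary.2
  rw [this, one_mul, trace_diagonal]
  simp

lemma det_le_one {n : ℕ} (hn : 1 ≤ n) (C : Matrix (Fin n) (Fin n) ℂ)
    (hC : ∀ j, ∑ i, ‖C i j‖ ^ 2 = 1) : ‖C.det‖ ≤ 1 := by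
  have hP : (Cᴴ * C).PosSemidef := posSemidef_conjTranspose_mul_self C
  have hherm := hP.isHermitian
  have hdet : (Cᴴ * C).det = ((‖C.det‖ ^ 2 : ℝ) : ℂ) := by
    rw [det_mul, det_conjTranspose, Complex.star_def, ← Complex.normSq_eq_conj_mul_self,
      Complex.normSq_eq_norm_sq]
  have htr : (Cᴴ * C).trace = (n : ℂ) := by
    rw [trace]
    have : ∀ j, (Cᴴ * C).diag j = ((1:ℝ) : ℂ) := by
      intro j
      simp only [diag_apply, mul_apply, conjTranspose_apply]
      rw [← hC j]
      push_cast
      congr 1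
      ext i
      rw [Complex.star_def, ← Complex.normSq_eq_conj_mul_self, Complex.normSq_eq_norm_sq]
      norm_cast
    rw [Finset.sum_congr rfl (fun j (_ : j ∈ Finset.univ) => this j)]
    simp
  -- eigenvalues
  have hsum : ∑ i, hherm.eigenvalues i = (n : ℝ) := by
    have := trace_eq_sum_eig hherm
    rw [htr] at this
    have : ((∑ i, hherm.eigenvalues i : ℝ) : ℂ) = ((n:ℝ) : ℂ) := by push_cast; rw [← this]
    exact_mod_cast this
  have hprod : ‖C.det‖ ^ 2 = ∏ i, hherm.eigenvalues i := by
    have h1 := hherm.det_eq_prod_eigenvalues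
    rw [hdet] at h1
    have h2 : ((∏ i, hherm.eigenvalues i : ℝ) : ℂ) = ∏ i, (hherm.eigenvalues i : ℂ) := by
      push_cast; rfl
    exact Complex.ofReal_injective (h1.trans h2.symm)
  have hle : ‖C.det‖ ^ 2 ≤ 1 := by
    rw [hprod]
    calc ∏ i, hherm.eigenvalues i ≤ ((∑ i, hherm.eigenvalues i) / n) ^ n := by
          exact amgm hn hherm.eigenvalues (fun i => hP.eigenvalues_nonneg i)
      _ = 1 := by rw [hsum]; field_simp; exact one_pow n
  nlinarith [norm_nonneg C.det]

lemma col_le_spec {n : ℕ} (M : Matrix (Fin n) (Fin n) ℂ) (j : Fin n) :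
    Real.sqrt (∑ i, ‖M i j‖ ^ 2) ≤ specNorm M := by
  have h := (LinearMap.toContinuousLinearMap (Matrix.toEuclideanLin M)).le_opNorm
      (EuclideanSpace.single j 1)
  have hv : ‖(EuclideanSpace.single j (1:ℂ) : EuclideanSpace ℂ (Fin n))‖ = 1 := by simp
  rw [hv, mul_one] at h
  refine le_trans (le_of_eq ?_) h
  rw [LinearMap.coe_toContinuousLinearMap']
  rw [EuclideanSpace.norm_eq]
  congr 1
  apply Finset.sum_congr rfl
  intro i _
  congr 1
  show ‖M i j‖ = ‖Matrix.toEuclideanLin M (EuclideanSpace.single j 1) i‖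
  congr 1
  rw [Matrix.toEuclideanLin_apply]
  show M i j = (M *ᵥ (WithLp.equiv 2 _ (EuclideanSpace.single j (1:ℂ)))) i
  have : (WithLp.equiv 2 (Fin n → ℂ)) (EuclideanSpace.single j (1:ℂ)) = Pi.single j 1 := rfl
  rw [this, Matrix.mulVec_single]
  simp

lemma hadamard {n : ℕ} (hn : 1 ≤ n) (N : Matrix (Fin n) (Fin n) ℂ) :
    ‖N.det‖ ≤ ∏ j, Real.sqrt (∑ i, ‖N i j‖ ^ 2) := by
  by_cases hz : ∃ j, ∀ i, N i j = 0
  · obtain ⟨j, hj⟩ := hz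
    rw [Matrix.det_eq_zero_of_column_eq_zero j hj]
    simp only [norm_zero]
    positivity
  · push_neg at hz
    set c : Fin n → ℝ := fun j => Real.sqrt (∑ i, ‖N i j‖ ^ 2) with hc
    have hsum : ∀ j, 0 < ∑ i, ‖N i j‖ ^ 2 := by
      intro j
      obtain ⟨i, hi⟩ := hz j
      have h1 : 0 < ‖N i j‖ ^ 2 := by
        have := norm_pos_iff.mpr hi
        positivity
      refine lt_of_lt_of_le h1 ?_
      exact Finset.single_le_sum (f := fun i => ‖N i j‖ ^ 2)
        (fun i _ => by positivity) (Finset.mem_univ i)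
    have hcpos : ∀ j, 0 < c j := fun j => Real.sqrt_pos.mpr (hsum j)
    have hcsq : ∀ j, c j ^ 2 = ∑ i, ‖N i j‖ ^ 2 := fun j => Real.sq_sqrt (hsum j).le
    set C : Matrix (Fin n) (Fin n) ℂ :=
      N * Matrix.diagonal (fun j => (((c j)⁻¹ : ℝ) : ℂ)) with hCdef
    have hCe : ∀ i j, C i j = N i j * (((c j)⁻¹ : ℝ) : ℂ) := by
      intro i j; rw [hCdef, Matrix.mul_diagonal]
    have hC : ∀ j, ∑ i, ‖C i j‖ ^ 2 = 1 := by
      intro j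
      have : ∀ i, ‖C i j‖ ^ 2 = ‖N i j‖ ^ 2 * ((c j)⁻¹) ^ 2 := by
        intro i
        rw [hCe, norm_mul, mul_pow, Complex.norm_real, Real.norm_eq_abs,
          abs_of_nonneg (by positivity)]
      rw [Finset.sum_congr rfl (fun i _ => this i), ← Finset.sum_mul, ← hcsq j]
      rw [← mul_pow, mul_inv_cancel₀ (hcpos j).ne']; norm_num
    have h1 := det_le_one hn C hC
    have h2 : C.det = N.det * ∏ j, (((c j)⁻¹ : ℝ) : ℂ) := by
      rw [hCdef, det_mul, det_diagonal]
    have h3 : ‖C.det‖ = ‖N.det‖ * ∏ j, (c j)⁻¹ := by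
      rw [h2, norm_mul]
      congr 1
      rw [norm_prod]
      apply Finset.prod_congr rfl
      intro j _
      rw [Complex.norm_real, Real.norm_eq_abs, abs_of_nonneg (by positivity)]
    have hprodpos : 0 < ∏ j, c j := Finset.prod_pos (fun j _ => hcpos j)
    rw [h3, Finset.prod_inv_distrib] at h1
    calc ‖N.det‖ = ‖N.det‖ * (∏ j, c j)⁻¹ * (∏ j, c j) := by field_simp
      _ ≤ 1 * (∏ j, c j) := by
          apply mul_le_mul_of_nonneg_right h1 hprodpos.le
      _ = ∏ j, c j := one_mul _

lemma specNorm_nonneg {n : ℕ} (M : Matrix (Fin n) (Fin n) ℂ) : 0 ≤ specNorm M :=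
  norm_nonneg _


/-- Ipsen–Rehman determinant perturbation inequality, used in the proof of
Lemma 6.5 of the paper. -/
theorem stmt4 {n : ℕ} (hn : 1 ≤ n) (A B : Matrix (Fin n) (Fin n) ℂ) :
    ‖A.det - B.det‖ ≤
      (n : ℝ) * specNorm (A - B) * max (specNorm A) (specNorm B) ^ (n - 1) := by
  set r := max (specNorm A) (specNorm B) with hr
  have hr0 : 0 ≤ r := le_trans (specNorm_nonneg A) (le_max_left _ _)
  set M : ℕ → Matrix (Fin n) (Fin n) ℂ :=
    fun k => Matrix.of (fun i j => if (j : ℕ) < k then A i j else B i j) with hM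
  have hM0 : M 0 = B := by ext i j; simp [hM]
  have hMn : M n = A := by ext i j; simp [hM, j.isLt]
  have htel : A.det - B.det = ∑ k ∈ Finset.range n, ((M (k+1)).det - (M k).det) := by
    rw [Finset.sum_range_sub (fun k => (M k).det), hM0, hMn]
  -- bound each term
  have hterm : ∀ k ∈ Finset.range n,
      ‖(M (k+1)).det - (M k).det‖ ≤ specNorm (A - B) * r ^ (n - 1) := by
    intro k hk
    rw [Finset.mem_range] at hk
    set j₀ : Fin n := ⟨k, hk⟩ with hj₀
    have e1 : M (k+1) = updateCol (M k) j₀ (fun i => A i j₀) := by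
      ext i j
      rw [updateCol_apply]
      by_cases h : j = j₀
      · subst h; simp [hM, hj₀]
      · have hne : (j : ℕ) ≠ k := fun hc => h (Fin.ext hc)
        simp only [hM, of_apply, if_neg h]
        by_cases h2 : (j : ℕ) < k
        · rw [if_pos h2, if_pos (by omega)]
        · rw [if_neg h2, if_neg (by omega)]
    have e2 : M k = updateCol (M k) j₀ (fun i => B i j₀) := by
      conv_lhs => rw [← updateCol_eq_self (M k) j₀]
      congr 1
      ext i
      simp [hM, hj₀]
    have e3 : (M (k+1)).det - (M k).det =
        (updateCol (M k) j₀ (fun i => A i j₀ - B i j₀)).det := by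
      rw [e1]
      conv_lhs => rw [e2]
      have : (fun i => A i j₀ - B i j₀) = (fun i => A i j₀) + (-1 : ℂ) • (fun i => B i j₀) := by
        ext i; simp; ring
      rw [this, det_updateCol_add, det_updateCol_smul]
      have e4 : (((M k).updateCol j₀ fun i => B i j₀).updateCol j₀ fun i => A i j₀)
          = ((M k).updateCol j₀ fun i => A i j₀) := by
        ext i j
        by_cases h : j = j₀ <;> simp [updateCol_apply, h]
      rw [e4]
      ring
    rw [e3]
    set N := updateCol (M k) j₀ (fun i => A i j₀ - B i j₀) with hN
    refine le_trans (hadamard hn N) ?_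
    have hb : ∀ j, Real.sqrt (∑ i, ‖N i j‖ ^ 2) ≤
        if j = j₀ then specNorm (A - B) else r := by
      intro j
      by_cases h : j = j₀
      · subst h
        rw [if_pos rfl]
        have : ∀ i, N i j₀ = (A - B) i j₀ := by
          intro i; rw [hN, updateCol_apply, if_pos rfl]; simp
        rw [show (∑ i, ‖N i j₀‖ ^ 2) = ∑ i, ‖(A - B) i j₀‖ ^ 2 from
          Finset.sum_congr rfl (fun i _ => by rw [this i])]
        exact col_le_spec (A - B) j₀
      · rw [if_neg h]
        have hNj : ∀ i, N i j = M k i j := by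
          intro i; rw [hN, updateCol_apply, if_neg h]
        by_cases h2 : (j : ℕ) < k
        · have : ∀ i, N i j = A i j := by
            intro i; rw [hNj, hM]; simp [h2]
          rw [show (∑ i, ‖N i j‖ ^ 2) = ∑ i, ‖A i j‖ ^ 2 from
            Finset.sum_congr rfl (fun i _ => by rw [this i])]
          exact le_trans (col_le_spec A j) (le_max_left _ _)
        · have : ∀ i, N i j = B i j := by
            intro i; rw [hNj, hM]; simp [h2]
          rw [show (∑ i, ‖N i j‖ ^ 2) = ∑ i, ‖B i j‖ ^ 2 from
            Finset.sum_congr rfl (fun i _ => by rw [this i])]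
          exact le_trans (col_le_spec B j) (le_max_right _ _)
    calc ∏ j, Real.sqrt (∑ i, ‖N i j‖ ^ 2)
        ≤ ∏ j, (if j = j₀ then specNorm (A - B) else r) := by
          apply Finset.prod_le_prod (fun j _ => Real.sqrt_nonneg _) (fun j _ => hb j)
      _ = specNorm (A - B) * r ^ (n - 1) := by
          rw [← Finset.mul_prod_erase Finset.univ _ (Finset.mem_univ j₀), if_pos rfl]
          congr 1
          rw [Finset.prod_congr rfl (fun j hj => if_neg (Finset.ne_of_mem_erase hj)),
            Finset.prod_const, Finset.card_erase_of_mem (Finset.mem_univ j₀),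
            Finset.card_univ, Fintype.card_fin]
  calc ‖A.det - B.det‖ ≤ ∑ k ∈ Finset.range n, ‖(M (k+1)).det - (M k).det‖ := by
        rw [htel]; exact norm_sum_le _ _
    _ ≤ ∑ k ∈ Finset.range n, specNorm (A - B) * r ^ (n - 1) :=
        Finset.sum_le_sum hterm
    _ = (n : ℝ) * specNorm (A - B) * r ^ (n - 1) := by
        rw [Finset.sum_const, Finset.card_range, nsmul_eq_mul]; ring

end Aux
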